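/- Let A ⊆ 𝔽_q with |A| = n, let 1 < k < n, let θ ∈ 𝔽_q with θ ≠ 0, let C = TRS_k(A, θ), and let u ∈ 𝔽_q^n. Let C′ = C + 𝔽_q·u be the linear code spanned by C and u. Then u is a deep hole of C if and only if C′ is an [n, k+1] MDS code, i.e., dim_{𝔽_q} C′ = k + 1 and the minimum Hamming distance of C′ equals n − k. -/

import Mathlib

set_option synthInstance.maxHeartbeats 1000000
set_option maxHeartbeats 2000000

open Polynomial Finset

/-- The set `S_{k,θ}` of twisted polynomials
`Σ_{i=0}^{k-2} f_i x^i + f_{k-1}(x^{k-1} + θ x^k)`. -/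
def Sset (F : Type*) [Field F] (k : ℕ) (θ : F) : Set (Polynomial F) :=
  {p | ∃ f : ℕ → F, p = (∑ i ∈ Finset.range (k - 1), Polynomial.C (f i) * Polynomial.X ^ i)
        + Polynomial.C (f (k - 1)) * (Polynomial.X ^ (k - 1) + Polynomial.C θ * Polynomial.X ^ k)}

/-- The twisted Reed–Solomon code `TRS_k(A, θ)` for the evaluation sequence `α`. -/
def TRS {F : Type*} [Field F] {n : ℕ} (α : Fin n → F) (k : ℕ) (θ : F) : Set (Fin n → F) :=
  {v | ∃ p ∈ Sset F k θ, v = fun j => p.eval (α j)}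

/-- The (Hamming) error distance `d(u, C)` from a word `u` to a code `C`. -/
noncomputable def distTo {F : Type*} [DecidableEq F] {n : ℕ} (u : Fin n → F)
    (C : Set (Fin n → F)) : ℕ :=
  sInf {d | ∃ c ∈ C, hammingDist u c = d}

/-- The covering radius `ρ(C) = max_u d(u, C)` of a code `C`. -/
noncomputable def covRad {F : Type*} [DecidableEq F] {n : ℕ} (C : Set (Fin n → F)) : ℕ :=
  sSup {d | ∃ u, distTo u C = d}

/-- `u` is a deep hole of `C` if `d(u, C) = ρ(C)`. -/
def IsDeepHole {F : Type*} [DecidableEq F] {n : ℕ} (C : Set (Fin n → F)) (u : Fin n → F) :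
    Prop :=
  distTo u C = covRad C

/-- The column vector `c_{r,θ}(a) = (1, a, …, a^{r-2}, a^{r-1} - θ a^r)ᵀ ∈ 𝔽_q^r`. -/
def crv (F : Type*) [Field F] (r : ℕ) (θ a : F) : Fin r → F :=
  fun i => if (i : ℕ) = r - 1 then a ^ (r - 1) - θ * a ^ r else a ^ (i : ℕ)

/-- The parity-check matrix `H` whose `j`-th column is `c_{r,θ}(α_j)`. -/
def Hmat {F : Type*} [Field F] {n : ℕ} (r : ℕ) (θ : F) (α : Fin n → F) :
    Matrix (Fin r) (Fin n) F :=
  Matrix.of fun i j => crv F r θ (α j) i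

/-- The minimum Hamming distance `min_{c ≠ c' ∈ C} d(c, c')` of a code `C`. -/
noncomputable def minDist {F : Type*} [DecidableEq F] {n : ℕ} (C : Set (Fin n → F)) : ℕ :=
  sInf {d | ∃ c ∈ C, ∃ c' ∈ C, c ≠ c' ∧ hammingDist c c' = d}


section Aux

variable {F : Type*} [Field F] [DecidableEq F]

lemma exists_codeword_close {F : Type*} [Field F] [DecidableEq F] :
    ∀ (k : ℕ) (ι : Type) [Fintype ι] [DecidableEq ι] (V : Submodule F (ι → F)),
      Module.finrank F V = k → ∀ u : ι → F,
      ∃ c ∈ V, (Finset.univ.filter fun j => c j ≠ u j).card + k ≤ Fintype.card ι := by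
  intro k
  induction k with
  | zero =>
    intro ι _ _ V hV u
    exact ⟨0, V.zero_mem, by simpa using (Finset.card_filter_le Finset.univ _)⟩
  | succ r IH =>
    intro ι _ _ V hV u
    have hVpos : 0 < Module.finrank F V := by omega
    have hnt : Nontrivial ↥V := Module.nontrivial_of_finrank_pos hVpos
    obtain ⟨v, hv0⟩ := exists_ne (0 : ↥V)
    have hco : ∃ j₀ : ι, (v : ι → F) j₀ ≠ 0 := by
      by_contra h
      push_neg at h
      exact hv0 (Subtype.ext (funext h))
    obtain ⟨j₀, hj₀⟩ := hco
    set ψ : ↥V →ₗ[F] F := (LinearMap.proj j₀).comp V.subtype with hψdef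
    have hψv : ψ v = (v : ι → F) j₀ := rfl
    have hψs : Function.Surjective ψ := by
      intro a
      refine ⟨(a * ((v : ι → F) j₀)⁻¹) • v, ?_⟩
      have : ψ ((a * ((v : ι → F) j₀)⁻¹) • v) = (a * ((v : ι → F) j₀)⁻¹) * (v : ι → F) j₀ := rfl
      rw [this]
      field_simp
    have hrn : Module.finrank F ↥(LinearMap.range ψ) + Module.finrank F ↥(LinearMap.ker ψ)
        = Module.finrank F ↥V := LinearMap.finrank_range_add_finrank_ker ψ
    have hrt : LinearMap.range ψ = ⊤ := LinearMap.range_eq_top.2 hψs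
    have hker : Module.finrank F ↥(LinearMap.ker ψ) = r := by
      rw [hrt] at hrn
      simp [finrank_top, hV] at hrn
      omega
    obtain ⟨v₁, hv₁⟩ := hψs (u j₀)
    set ρ : ↥V →ₗ[F] ({j : ι // j ≠ j₀} → F) :=
      (LinearMap.funLeft F F Subtype.val).comp V.subtype with hρdef
    set μ : ↥(LinearMap.ker ψ) →ₗ[F] ({j : ι // j ≠ j₀} → F) :=
      ρ.comp (LinearMap.ker ψ).subtype with hμdef
    have key : ∀ w : ↥(LinearMap.ker ψ), μ w = 0 → w = 0 := by
      intro w hw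
      have h1 : ∀ j : ι, j ≠ j₀ → ((w : ↥V) : ι → F) j = 0 := by
        intro j hj
        exact congrFun hw ⟨j, hj⟩
      have h2 : ((w : ↥V) : ι → F) j₀ = 0 := LinearMap.mem_ker.mp w.2
      have : ((w : ↥V) : ι → F) = 0 := by
        funext j
        by_cases h : j = j₀
        · rw [h]; exact h2
        · exact h1 j h
      exact Subtype.ext (Subtype.ext this)
    have hμinj : Function.Injective ⇑μ := by
      intro w w' hww
      apply Subtype.ext; apply Subtype.ext; funext j
      by_cases h : j = j₀
      · rw [h]
        have hw0 : ((w : ↥V) : ι → F) j₀ = 0 := LinearMap.mem_ker.mp w.2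
        have hw'0 : ((w' : ↥V) : ι → F) j₀ = 0 := LinearMap.mem_ker.mp w'.2
        rw [hw0, hw'0]
      · exact congrFun hww ⟨j, h⟩
    have hV' : Module.finrank F ↥(LinearMap.range μ) = r := by
      rw [LinearMap.finrank_range_of_inj hμinj, hker]
    obtain ⟨c', hc'mem, hc'⟩ := IH {j : ι // j ≠ j₀} (LinearMap.range μ) hV'
      (fun j => u j.val - (v₁ : ι → F) j.val)
    obtain ⟨w, hw⟩ := hc'mem
    set c : ι → F := (v₁ : ι → F) + ((w : ↥V) : ι → F) with hcdef
    have hcV : c ∈ V := V.add_mem v₁.2 (w : ↥V).2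
    have hwj₀ : ((w : ↥V) : ι → F) j₀ = 0 := LinearMap.mem_ker.mp w.2
    have hcj₀ : c j₀ = u j₀ := by
      simp only [hcdef, Pi.add_apply, hwj₀, add_zero]
      exact hv₁
    have hkey : ∀ (j : ι) (h : j ≠ j₀), (c' ⟨j, h⟩ ≠ u j - (v₁ : ι → F) j) ↔ c j ≠ u j := by
      intro j h
      have hc'j : c' ⟨j, h⟩ = ((w : ↥V) : ι → F) j := by rw [← hw]; rfl
      rw [hc'j]
      have hiff : ((w : ↥V) : ι → F) j = u j - (v₁ : ι → F) j ↔ c j = u j := by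
        rw [hcdef]
        simp only [Pi.add_apply]
        rw [eq_sub_iff_add_eq, add_comm]
      exact not_congr hiff
    have hcard : (Finset.univ.filter fun j => c j ≠ u j).card
        = (Finset.univ.filter fun j : {j : ι // j ≠ j₀} =>
            c' j ≠ u j.val - (v₁ : ι → F) j.val).card := by
      refine Finset.card_bij
        (fun j hj => (⟨j, fun hh => (Finset.mem_filter.mp hj).2 (by rw [hh, hcj₀])⟩ :
          {j : ι // j ≠ j₀})) ?_ ?_ ?_
      · intro j hj
        simp only [Finset.mem_filter, Finset.mem_univ, true_and]
        exact (hkey j _).mpr (Finset.mem_filter.mp hj).2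
      · intro j₁ h₁ j₂ h₂ heq
        exact congrArg Subtype.val heq
      · intro b hb
        refine ⟨b.val, Finset.mem_filter.mpr ⟨Finset.mem_univ _, ?_⟩, Subtype.ext rfl⟩
        have := (Finset.mem_filter.mp hb).2
        have hb2 := (hkey b.val b.2).mp (by simpa using this)
        exact hb2
    have h1 : Fintype.card {j : ι // j ≠ j₀} = Fintype.card ι - 1 := by
      rw [Fintype.card_subtype]
      rw [Finset.filter_ne' Finset.univ j₀]
      rw [Finset.card_erase_of_mem (Finset.mem_univ _), Finset.card_univ]
    have h2 : 0 < Fintype.card ι := Fintype.card_pos_iff.mpr ⟨j₀⟩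
    refine ⟨c, hcV, ?_⟩
    rw [hcard]
    omega


/-- Basis polynomials for the twisted space. -/
noncomputable def bp (k : ℕ) (θ : F) (i : ℕ) : Polynomial F :=
  if i = k - 1 then X ^ (k - 1) + C θ * X ^ k else X ^ i

noncomputable def psum (k : ℕ) (θ : F) (f : ℕ → F) : Polynomial F :=
  ∑ i ∈ Finset.range k, C (f i) * bp k θ i

lemma coeff_bp (k : ℕ) (θ : F) (i m : ℕ) :
    (bp k θ i).coeff m = if i = k - 1 then
      ((if m = k - 1 then (1:F) else 0) + θ * (if m = k then 1 else 0))
    else (if m = i then 1 else 0) := by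
  by_cases h : i = k - 1
  · rw [bp, if_pos h, if_pos h, coeff_add, coeff_C_mul, coeff_X_pow, coeff_X_pow]
  · rw [bp, if_neg h, if_neg h, coeff_X_pow]

lemma coeff_psum_lt {k : ℕ} (hk : 2 ≤ k) (θ : F) (f : ℕ → F) {m : ℕ} (hm : m < k - 1) :
    (psum k θ f).coeff m = f m := by
  unfold psum
  rw [finset_sum_coeff]
  rw [Finset.sum_eq_single m]
  · rw [coeff_C_mul, coeff_bp]
    rw [if_neg (by omega : ¬ m = k - 1)]
    simp
  · intro i hi hne
    rw [coeff_C_mul, coeff_bp]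
    split_ifs with h1 h2 h3 <;> simp_all <;> omega
  · intro h
    exact absurd (Finset.mem_range.mpr (by omega)) h

lemma coeff_psum_last {k : ℕ} (hk : 2 ≤ k) (θ : F) (f : ℕ → F) :
    (psum k θ f).coeff (k - 1) = f (k - 1) := by
  unfold psum
  rw [finset_sum_coeff]
  rw [Finset.sum_eq_single (k - 1)]
  · rw [coeff_C_mul, coeff_bp, if_pos rfl, if_pos rfl, if_neg (by omega : ¬ k - 1 = k)]
    ring
  · intro i hi hne
    rw [coeff_C_mul, coeff_bp, if_neg hne, if_neg (Ne.symm hne)]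
    ring
  · intro h
    exact absurd (Finset.mem_range.mpr (by omega)) h

lemma coeff_psum_k {k : ℕ} (hk : 2 ≤ k) (θ : F) (f : ℕ → F) :
    (psum k θ f).coeff k = θ * f (k - 1) := by
  unfold psum
  rw [finset_sum_coeff]
  rw [Finset.sum_eq_single (k - 1)]
  · rw [coeff_C_mul, coeff_bp, if_pos rfl, if_neg (by omega : ¬ k = k - 1), if_pos rfl]
    ring
  · intro i hi hne
    simp only [Finset.mem_range] at hi
    rw [coeff_C_mul, coeff_bp, if_neg hne, if_neg (by omega : ¬ k = i)]
    ring
  · intro h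
    exact absurd (Finset.mem_range.mpr (by omega)) h

lemma natDegree_psum_le {k : ℕ} (hk : 2 ≤ k) (θ : F) (f : ℕ → F) :
    (psum k θ f).natDegree ≤ k := by
  rw [natDegree_le_iff_coeff_eq_zero]
  intro m hm
  unfold psum
  rw [finset_sum_coeff]
  apply Finset.sum_eq_zero
  intro i hi
  rw [coeff_C_mul, coeff_bp]
  simp only [Finset.mem_range] at hi
  split_ifs with h1 h2 h3 <;> first | (exfalso; omega) | ring

lemma psum_congr {k : ℕ} (θ : F) {f g : ℕ → F} (h : ∀ i < k, f i = g i) :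
    psum k θ f = psum k θ g := by
  unfold psum
  apply Finset.sum_congr rfl
  intro i hi
  rw [h i (Finset.mem_range.mp hi)]

lemma Sset_eq {k : ℕ} (hk : 1 ≤ k) (θ : F) :
    Sset F k θ = {p | ∃ f : ℕ → F, p = psum k θ f} := by
  have key : ∀ f : ℕ → F, psum k θ f
      = (∑ i ∈ Finset.range (k - 1), C (f i) * X ^ i)
        + C (f (k - 1)) * (X ^ (k - 1) + C θ * X ^ k) := by
    intro f
    unfold psum
    have hk' : k = (k - 1) + 1 := by omega
    rw [hk', Finset.sum_range_succ]
    congr 1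
    · apply Finset.sum_congr rfl
      intro i hi
      simp only [Finset.mem_range] at hi
      rw [bp, if_neg (by omega)]
    · rw [bp, if_pos (by omega)]
      congr 1 <;> omega
  ext p
  constructor
  · rintro ⟨f, rfl⟩
    exact ⟨f, (key f).symm⟩
  · rintro ⟨f, rfl⟩
    exact ⟨f, (key f).symm ▸ rfl⟩

noncomputable def Emap (n k : ℕ) (θ : F) (α : Fin n → F) : (Fin k → F) →ₗ[F] (Fin n → F) where
  toFun f := fun j => ∑ i : Fin k, f i * Polynomial.eval (α j) (bp k θ i.val)
  map_add' f g := by funext j; simp [add_mul, Finset.sum_add_distrib]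
  map_smul' a f := by funext j; simp [Finset.mul_sum, mul_assoc]

lemma eval_psum {n k : ℕ} (θ : F) (α : Fin n → F) (f : ℕ → F) (j : Fin n) :
    Polynomial.eval (α j) (psum k θ f) = ∑ i ∈ Finset.range k, f i * Polynomial.eval (α j) (bp k θ i) := by
  unfold psum
  rw [Polynomial.eval_finset_sum]
  apply Finset.sum_congr rfl
  intro i _
  rw [Polynomial.eval_mul, Polynomial.eval_C]

lemma Emap_apply (n k : ℕ) (θ : F) (α : Fin n → F) (f : ℕ → F) :
    (fun j => Polynomial.eval (α j) (psum k θ f)) = Emap n k θ α (fun i : Fin k => f i.val) := by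
  funext j
  rw [eval_psum]
  show _ = ∑ i : Fin k, f i.val * Polynomial.eval (α j) (bp k θ i.val)
  rw [Fin.sum_univ_eq_sum_range (fun i => f i * Polynomial.eval (α j) (bp k θ i)) k]

lemma TRS_eq {n k : ℕ} (hk : 1 ≤ k) (θ : F) (α : Fin n → F) :
    TRS α k θ = ↑(LinearMap.range (Emap n k θ α)) := by
  ext v
  constructor
  · rintro ⟨p, hp, rfl⟩
    rw [Sset_eq hk θ] at hp
    obtain ⟨f, rfl⟩ := hp
    exact ⟨fun i : Fin k => f i.val, (Emap_apply n k θ α f).symm⟩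
  · rintro ⟨f, rfl⟩
    refine ⟨psum k θ (fun i => if h : i < k then f ⟨i, h⟩ else 0), ?_, ?_⟩
    · rw [Sset_eq hk θ]
      exact ⟨_, rfl⟩
    · rw [Emap_apply n k θ α (fun i => if h : i < k then f ⟨i, h⟩ else 0)]
      congr 1
      funext i
      rw [dif_pos i.isLt]

lemma Emap_injective {n k : ℕ} (hk : 2 ≤ k) (hkn : k < n) (θ : F) {α : Fin n → F}
    (hα : Function.Injective α) : Function.Injective (Emap n k θ α) := by
  have h0 : ∀ f : Fin k → F, Emap n k θ α f = 0 → f = 0 := by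
    intro f hf
    set fnat : ℕ → F := fun i => if h : i < k then f ⟨i, h⟩ else 0 with hfnat
    have hfn : (fun i : Fin k => fnat i.val) = f := by
      funext i
      simp only [hfnat, dif_pos i.isLt]
    have hev : ∀ j : Fin n, Polynomial.eval (α j) (psum k θ fnat) = 0 := by
      intro j
      have := congrFun (Emap_apply n k θ α fnat) j
      rw [hfn, hf] at this
      simpa using this
    have hp0 : psum k θ fnat = 0 := by
      apply Polynomial.eq_zero_of_natDegree_lt_card_of_eval_eq_zero' _ (Finset.univ.image α)
      · intro a ha
        obtain ⟨j, _, rfl⟩ := Finset.mem_image.mp ha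
        exact hev j
      · calc (psum k θ fnat).natDegree ≤ k := natDegree_psum_le hk θ fnat
          _ < n := hkn
          _ = (Finset.univ.image α).card := by
            rw [Finset.card_image_of_injective _ hα, Finset.card_univ, Fintype.card_fin]
    funext i
    by_cases hi : (i : ℕ) = k - 1
    · have := coeff_psum_last hk θ fnat
      rw [hp0, Polynomial.coeff_zero] at this
      have hfi : fnat (k - 1) = f i := by
        simp only [hfnat, dif_pos (show k - 1 < k by omega)]
        congr 1
        exact (Fin.ext hi).symm
      rw [← hfi, ← this]
      rfl
    · have hilt : (i : ℕ) < k - 1 := by have := i.isLt; omega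
      have := coeff_psum_lt hk θ fnat hilt
      rw [hp0, Polynomial.coeff_zero] at this
      have hfi : fnat i = f i := by
        simp only [hfnat, dif_pos i.isLt, Fin.eta]
      rw [← hfi, ← this]
      rfl
  intro f g hfg
  have : Emap n k θ α (f - g) = 0 := by rw [map_sub, hfg, sub_self]
  have := h0 _ this
  exact sub_eq_zero.mp this

lemma eval_weight {n k : ℕ} (hkn : k < n) {α : Fin n → F} (hα : Function.Injective α)
    {q : Polynomial F} (hq : q ≠ 0) (hdeg : q.natDegree ≤ k) :
    n ≤ (Finset.univ.filter fun j : Fin n => Polynomial.eval (α j) q ≠ 0).card + k := by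
  set Z := Finset.univ.filter fun j : Fin n => Polynomial.eval (α j) q = 0 with hZ
  have hsub : Z.image α ⊆ q.roots.toFinset := by
    intro a ha
    obtain ⟨j, hj, rfl⟩ := Finset.mem_image.mp ha
    rw [Multiset.mem_toFinset, Polynomial.mem_roots hq]
    exact (Finset.mem_filter.mp hj).2
  have hZcard : Z.card ≤ k := by
    calc Z.card = (Z.image α).card := (Finset.card_image_of_injective Z hα).symm
      _ ≤ q.roots.toFinset.card := Finset.card_le_card hsub
      _ ≤ Multiset.card q.roots := Multiset.toFinset_card_le _
      _ ≤ q.natDegree := Polynomial.card_roots' q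
      _ ≤ k := hdeg
  have hsplit := Finset.card_filter_add_card_filter_not
    (s := Finset.univ (α := Fin n)) (p := fun j => Polynomial.eval (α j) q = 0)
  rw [Finset.card_univ, Fintype.card_fin] at hsplit
  have : (Finset.univ.filter fun j : Fin n => ¬ Polynomial.eval (α j) q = 0)
      = (Finset.univ.filter fun j : Fin n => Polynomial.eval (α j) q ≠ 0) := rfl
  rw [this] at hsplit
  rw [hZ] at hZcard
  omega

lemma distTo_le {n : ℕ} {u : Fin n → F} {C : Set (Fin n → F)} {c : Fin n → F} (hc : c ∈ C) :
    distTo u C ≤ hammingDist u c :=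
  Nat.sInf_le ⟨c, hc, rfl⟩

lemma le_distTo {n : ℕ} {u : Fin n → F} {C : Set (Fin n → F)} {m : ℕ} (hne : C.Nonempty)
    (h : ∀ c ∈ C, m ≤ hammingDist u c) : m ≤ distTo u C := by
  obtain ⟨c, hc⟩ := hne
  refine le_csInf ⟨_, c, hc, rfl⟩ ?_
  rintro d ⟨c', hc', rfl⟩
  exact h c' hc'

lemma distTo_attained {n : ℕ} {u : Fin n → F} {C : Set (Fin n → F)} (hne : C.Nonempty) :
    ∃ c ∈ C, hammingDist u c = distTo u C := by
  obtain ⟨c, hc⟩ := hne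
  exact Nat.sInf_mem (⟨_, c, hc, rfl⟩ : Set.Nonempty {d | ∃ c ∈ C, hammingDist u c = d})

end Aux

/-- `u` is a deep hole of `C = TRS_k(A, θ)` iff the code
`C' = C + 𝔽_q·u` spanned by `C` and `u` is an `[n, k+1]` MDS code, i.e.
`dim C' = k + 1` and the minimum distance of `C'` is `n - k`. -/

theorem isDeepHole_iff_MDS_extension {F : Type*} [Field F] [Fintype F] [DecidableEq F]
    (n k : ℕ) (hk1 : 1 < k) (hkn : k < n) (α : Fin n → F) (hα : Function.Injective α)
    (θ : F) (hθ : θ ≠ 0) (u : Fin n → F) :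
    IsDeepHole (TRS α k θ) u ↔
      (Module.finrank F ↥(Submodule.span F (TRS α k θ ∪ {u})) = k + 1 ∧
        minDist ((Submodule.span F (TRS α k θ ∪ {u}) : Submodule F (Fin n → F)) :
          Set (Fin n → F)) = n - k) := by
  have hk2 : 2 ≤ k := hk1
  set CS := LinearMap.range (Emap n k θ α) with hCS
  have hTRS : TRS α k θ = ↑CS := TRS_eq (by omega) θ α
  have hrankCS : Module.finrank F CS = k := by
    rw [hCS, LinearMap.finrank_range_of_inj (Emap_injective hk2 hkn θ hα),
      Module.finrank_pi, Fintype.card_fin]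
  have hCSne : (↑CS : Set (Fin n → F)).Nonempty := ⟨0, CS.zero_mem⟩
  -- every codeword is an evaluation vector
  have hev : ∀ f : Fin k → F, ∀ j : Fin n, Emap n k θ α f j
      = Polynomial.eval (α j) (psum k θ (fun i => if h : i < k then f ⟨i, h⟩ else 0)) := by
    intro f j
    have hfn : (fun i : Fin k => (fun i' => if h : i' < k then f ⟨i', h⟩ else 0) i.val) = f := by
      funext i
      simp only [dif_pos i.isLt, Fin.eta]
    have := congrFun (Emap_apply n k θ α (fun i' => if h : i' < k then f ⟨i', h⟩ else 0)) j
    rw [hfn] at this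
    exact this.symm
  -- weight bound for nonzero codewords
  have hwtCS : ∀ c ∈ CS, c ≠ 0 → n ≤ hammingNorm c + k := by
    rintro c ⟨f, rfl⟩ hc0
    set fnat : ℕ → F := fun i' => if h : i' < k then f ⟨i', h⟩ else 0 with hfnat
    have hp0 : psum k θ fnat ≠ 0 := by
      intro h
      apply hc0
      funext j
      rw [hev f j, ← hfnat, h, Polynomial.eval_zero]
      rfl
    have := eval_weight hkn hα hp0 (natDegree_psum_le hk2 θ fnat)
    have hfilt : (Finset.univ.filter fun j : Fin n => Polynomial.eval (α j) (psum k θ fnat) ≠ 0)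
        = (Finset.univ.filter fun j : Fin n => Emap n k θ α f j ≠ 0) := by
      apply Finset.filter_congr
      intro j _
      rw [hev f j, ← hfnat]
    rw [hfilt] at this
    exact this
  -- upper bound on distance to the code
  have hub : ∀ u' : Fin n → F, distTo u' (↑CS : Set (Fin n → F)) ≤ n - k := by
    intro u'
    obtain ⟨c, hc, hcard⟩ := exists_codeword_close k (Fin n) CS hrankCS u'
    rw [Fintype.card_fin] at hcard
    have hd : hammingDist u' c = (Finset.univ.filter fun j => c j ≠ u' j).card := by
      rw [hammingDist_comm]
      rfl
    have := distTo_le (u := u') hc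
    omega
  -- the deep hole witness x^{k-1}
  set w : Fin n → F := fun j => (α j) ^ (k - 1) with hw
  have hlow : ∀ c ∈ CS, n - k ≤ hammingDist w c := by
    rintro c ⟨f, rfl⟩
    set fnat : ℕ → F := fun i' => if h : i' < k then f ⟨i', h⟩ else 0 with hfnat
    set q : Polynomial F := X ^ (k - 1) - psum k θ fnat with hq
    have hq0 : q ≠ 0 := by
      intro h
      have hps : psum k θ fnat = X ^ (k - 1) := by
        have := sub_eq_zero.mp h
        exact this.symm
      have h1 : θ * fnat (k - 1) = 0 := by
        rw [← coeff_psum_k hk2 θ fnat, hps, Polynomial.coeff_X_pow,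
          if_neg (by omega : ¬ k = k - 1)]
      have h2 : fnat (k - 1) = 1 := by
        rw [← coeff_psum_last hk2 θ fnat, hps, Polynomial.coeff_X_pow, if_pos rfl]
      rw [h2, mul_one] at h1
      exact hθ h1
    have hdeg : q.natDegree ≤ k := by
      refine le_trans (Polynomial.natDegree_sub_le _ _) (max_le ?_ (natDegree_psum_le hk2 θ fnat))
      rw [Polynomial.natDegree_X_pow]
      omega
    have hwt := eval_weight hkn hα hq0 hdeg
    have hfilt : (Finset.univ.filter fun j : Fin n => Polynomial.eval (α j) q ≠ 0)
        = (Finset.univ.filter fun j : Fin n => w j ≠ Emap n k θ α f j) := by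
      apply Finset.filter_congr
      intro j _
      rw [hq]
      rw [Polynomial.eval_sub, Polynomial.eval_pow, Polynomial.eval_X]
      rw [hev f j, ← hfnat]
      rw [sub_ne_zero]
    rw [hfilt] at hwt
    have : hammingDist w (Emap n k θ α f)
        = (Finset.univ.filter fun j : Fin n => w j ≠ Emap n k θ α f j).card := rfl
    omega
  have hdw : distTo w (↑CS : Set (Fin n → F)) = n - k :=
    le_antisymm (hub w) (le_distTo hCSne hlow)
  -- covering radius
  have hcov : covRad (↑CS : Set (Fin n → F)) = n - k := by
    have hbdd : BddAbove {d | ∃ u', distTo u' (↑CS : Set (Fin n → F)) = d} := by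
      refine ⟨n - k, ?_⟩
      rintro d ⟨u', rfl⟩
      exact hub u'
    have hmem : n - k ∈ {d | ∃ u', distTo u' (↑CS : Set (Fin n → F)) = d} := ⟨w, hdw⟩
    refine le_antisymm (csSup_le ⟨n - k, hmem⟩ ?_) (le_csSup hbdd hmem)
    rintro d ⟨u', rfl⟩
    exact hub u'
  -- the span
  unfold IsDeepHole
  rw [hTRS, hcov]
  have hspan : Submodule.span F ((↑CS : Set (Fin n → F)) ∪ {u}) = CS ⊔ Submodule.span F {u} := by
    rw [Submodule.span_union, Submodule.span_eq]
  have huC' : u ∈ Submodule.span F ((↑CS : Set (Fin n → F)) ∪ {u}) :=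
    Submodule.subset_span (Or.inr rfl)
  have hCSC' : ∀ c ∈ CS, c ∈ Submodule.span F ((↑CS : Set (Fin n → F)) ∪ {u}) := by
    intro c hc
    exact Submodule.subset_span (Or.inl hc)
  constructor
  · intro hdh
    have hune : u ∉ CS := by
      intro hu
      have h1 : distTo u (↑CS : Set (Fin n → F)) = 0 := by
        have := distTo_le (u := u) (C := (↑CS : Set (Fin n → F))) hu
        rw [hammingDist_self] at this
        omega
      omega
    have hu0 : u ≠ 0 := fun h => hune (h ▸ CS.zero_mem)
    -- lower bound on weights of nonzero words of C'
    have hwtC' : ∀ x ∈ Submodule.span F ((↑CS : Set (Fin n → F)) ∪ {u}), x ≠ 0 → n - k ≤ hammingNorm x := by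
      intro x hx hx0
      rw [hspan, Submodule.mem_sup] at hx
      obtain ⟨c, hc, y, hy, rfl⟩ := hx
      obtain ⟨a, rfl⟩ := Submodule.mem_span_singleton.mp hy
      by_cases ha : a = 0
      · subst ha
        rw [zero_smul, add_zero] at hx0 ⊢
        have := hwtCS c hc hx0
        omega
      · have hreg : ∀ _ : Fin n, IsSMulRegular F a⁻¹ :=
          fun _ => smul_right_injective F (inv_ne_zero ha)
        have hnorm : hammingNorm (a⁻¹ • (c + a • u)) = hammingNorm (c + a • u) :=
          hammingNorm_smul hreg _
        have heq : a⁻¹ • (c + a • u) = u - (-(a⁻¹ • c)) := by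
          rw [smul_add, smul_smul, inv_mul_cancel₀ ha, one_smul]
          abel
        have hmemneg : -(a⁻¹ • c) ∈ CS := CS.neg_mem (CS.smul_mem a⁻¹ hc)
        have := distTo_le (u := u) (C := (↑CS : Set (Fin n → F))) hmemneg
        rw [hdh] at this
        have hdist : hammingDist u (-(a⁻¹ • c)) = hammingNorm (a⁻¹ • (c + a • u)) := by
          rw [heq, hammingDist_comm, hammingDist_eq_hammingNorm, neg_add_eq_sub]
        omega
    constructor
    · -- finrank
      have hinf : CS ⊓ Submodule.span F {u} = ⊥ := by
        rw [eq_bot_iff]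
        rintro x hx
        obtain ⟨hx1, hx2⟩ := Submodule.mem_inf.mp hx
        obtain ⟨a, rfl⟩ := Submodule.mem_span_singleton.mp hx2
        by_cases ha : a = 0
        · rw [ha, zero_smul]; exact Submodule.zero_mem ⊥
        · exfalso
          apply hune
          have : a⁻¹ • (a • u) ∈ CS := CS.smul_mem a⁻¹ hx1
          rwa [smul_smul, inv_mul_cancel₀ ha, one_smul] at this
      have := Submodule.finrank_sup_add_finrank_inf_eq CS (Submodule.span F {u})
      rw [hinf, finrank_bot, hrankCS, finrank_span_singleton hu0] at this
      rw [hspan]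
      omega
    · -- minDist
      obtain ⟨c₀, hc₀, hdc₀⟩ := distTo_attained (u := u) hCSne
      rw [hdh] at hdc₀
      have hx0 : u - c₀ ≠ 0 := by
        intro h
        rw [sub_eq_zero] at h
        rw [h, hammingDist_self] at hdc₀
        omega
      have hxC' : u - c₀ ∈ Submodule.span F ((↑CS : Set (Fin n → F)) ∪ {u}) :=
        Submodule.sub_mem _ huC' (hCSC' c₀ hc₀)
      have hxwt : hammingNorm (u - c₀) = n - k := by
        rw [← neg_add_eq_sub, ← hammingDist_eq_hammingNorm, hammingDist_comm, hdc₀]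
      refine le_antisymm ?_ ?_
      · apply Nat.sInf_le
        exact ⟨u - c₀, hxC', 0, Submodule.zero_mem _, hx0, by
          rw [hammingDist_zero_right, hxwt]⟩
      · refine le_csInf ⟨_, u - c₀, hxC', 0, Submodule.zero_mem _, hx0, rfl⟩ ?_
        rintro d ⟨c, hc, c', hc', hne, rfl⟩
        rw [hammingDist_comm, hammingDist_eq_hammingNorm, neg_add_eq_sub]
        exact hwtC' (c - c') (Submodule.sub_mem _ hc hc') (sub_ne_zero.mpr hne)
  · rintro ⟨hdim, hmin⟩
    have hune : u ∉ CS := by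
      intro hu
      have hsub : Submodule.span F {u} ≤ CS := by
        rw [Submodule.span_le, Set.singleton_subset_iff]
        exact hu
      rw [hspan, sup_eq_left.mpr hsub, hrankCS] at hdim
      omega
    refine le_antisymm (hub u) (le_distTo hCSne ?_)
    intro c hc
    have hne : u ≠ c := fun h => hune (h ▸ hc)
    have : minDist ((Submodule.span F ((↑CS : Set (Fin n → F)) ∪ {u}) : Submodule F (Fin n → F)) :
        Set (Fin n → F)) ≤ hammingDist u c :=
      Nat.sInf_le ⟨u, huC', c, hCSC' c hc, hne, rfl⟩
    omega
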